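/- (Case 1 of OP_DES, slack constraint.) Let α∘ = (1/X)·(k_e/p_e − 1/b_e) and β∘ = (1/Y)·(k_h/p_h − 1/b_h). If 0 < α∘ < 1, 0 < β∘ < 1, and X·α∘ + Y·β∘ ≥ M_min, then (α∘, β∘) lies in the feasible set D and is the unique global maximizer of U on D: for every (α,β) ∈ D with (α,β) ≠ (α∘,β∘) one has U(α,β) < U(α∘,β∘). -/

import Mathlib

/-- Per-coordinate estimate: the concave function `t ↦ k log(1+ct) − pZt` is
strictly maximized at `t0` where `1 + c·t0 = ck/(pZ)`. -/
lemma des_aux (k p Z c t0 t : ℝ) (hk : 0 < k) (hp : 0 < p) (hZ : 0 < Z)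
    (hc : 0 < c) (hto : 0 < t0) (hb : 1 + c * t0 = c * k / (p * Z))
    (ht : 0 ≤ t) :
    (k * Real.log (1 + c * t) - p * Z * t ≤
      k * Real.log (1 + c * t0) - p * Z * t0) ∧
    (t ≠ t0 → k * Real.log (1 + c * t) - p * Z * t <
      k * Real.log (1 + c * t0) - p * Z * t0) := by
  have ha : (0:ℝ) < 1 + c * t := by nlinarith
  have hbpos : (0:ℝ) < 1 + c * t0 := by nlinarith
  have hkey : k * c / (1 + c * t0) = p * Z := by
    rw [hb]; field_simp
  have hdiv : (0:ℝ) < (1 + c * t) / (1 + c * t0) := div_pos ha hbpos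
  have hlogdiff : Real.log (1 + c * t) - Real.log (1 + c * t0)
      = Real.log ((1 + c * t) / (1 + c * t0)) := by
    rw [Real.log_div (ne_of_gt ha) (ne_of_gt hbpos)]
  have hlin : ((1 + c * t) / (1 + c * t0)) - 1 = c * (t - t0) / (1 + c * t0) := by
    field_simp; ring
  constructor
  · have h1 : Real.log ((1 + c * t) / (1 + c * t0)) ≤
        ((1 + c * t) / (1 + c * t0)) - 1 := Real.log_le_sub_one_of_pos hdiv
    have h2 : Real.log (1 + c * t) - Real.log (1 + c * t0) ≤
        c * (t - t0) / (1 + c * t0) := by rw [hlogdiff, ← hlin]; exact h1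
    have h3 : k * (Real.log (1 + c * t) - Real.log (1 + c * t0)) ≤
        k * (c * (t - t0) / (1 + c * t0)) :=
      mul_le_mul_of_nonneg_left h2 (le_of_lt hk)
    have h4 : k * (c * (t - t0) / (1 + c * t0)) = p * Z * (t - t0) := by
      rw [← hkey]; field_simp
    nlinarith
  · intro hne
    have hne' : (1 + c * t) / (1 + c * t0) ≠ 1 := by
      intro h
      field_simp at h
      apply hne
      have h' : c * (t - t0) = 0 := by linarith
      rcases mul_eq_zero.mp h' with h'' | h''
      · exact absurd h'' hc.ne'
      · linarith
    have h1 : Real.log ((1 + c * t) / (1 + c * t0)) <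
        ((1 + c * t) / (1 + c * t0)) - 1 := Real.log_lt_sub_one_of_pos hdiv hne'
    have h2 : Real.log (1 + c * t) - Real.log (1 + c * t0) <
        c * (t - t0) / (1 + c * t0) := by rw [hlogdiff, ← hlin]; exact h1
    have h3 : k * (Real.log (1 + c * t) - Real.log (1 + c * t0)) <
        k * (c * (t - t0) / (1 + c * t0)) := mul_lt_mul_of_pos_left h2 hk
    have h4 : k * (c * (t - t0) / (1 + c * t0)) = p * Z * (t - t0) := by
      rw [← hkey]; field_simp
    nlinarith

/-- The DES utility function `U(α,β)` with adaption coefficients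
`b_e = (e−1)/X`, `b_h = (e−1)/Y`. -/
noncomputable def desU (X Y ke kh pe ph C0 : ℝ) (q : ℝ × ℝ) : ℝ :=
  ke * Real.log (1 + ((Real.exp 1 - 1) / X) * X * q.1)
  + kh * Real.log (1 + ((Real.exp 1 - 1) / Y) * Y * q.2)
  + pe * X * (1 - q.1) + ph * Y * (1 - q.2) - C0

/-- The feasible set `D` of the DES optimization problem. -/
def desD (X Y Mmin : ℝ) : Set (ℝ × ℝ) :=
  {q | q.1 ∈ Set.Icc (0:ℝ) 1 ∧ q.2 ∈ Set.Icc (0:ℝ) 1 ∧ X * q.1 + Y * q.2 ≥ Mmin}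

/-- Case 1 of OP_DES, slack constraint: the stationary point `(α∘, β∘)`, when
interior and feasible, is the unique global maximizer of `U` on `D`. -/
theorem stmt_1 (X Y ke kh pe ph C0 Mmin αo βo : ℝ)
    (hX : 0 < X) (hY : 0 < Y) (hke : 0 < ke) (hkh : 0 < kh)
    (hpe : 0 < pe) (hph : 0 < ph)
    (hM : max X Y < Mmin) (hM' : Mmin < X + Y)
    (hαo : αo = (1 / X) * (ke / pe - 1 / ((Real.exp 1 - 1) / X)))
    (hβo : βo = (1 / Y) * (kh / ph - 1 / ((Real.exp 1 - 1) / Y)))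
    (hα1 : 0 < αo) (hα2 : αo < 1) (hβ1 : 0 < βo) (hβ2 : βo < 1)
    (hfeas : X * αo + Y * βo ≥ Mmin) :
    (αo, βo) ∈ desD X Y Mmin ∧
      ∀ q ∈ desD X Y Mmin, q ≠ (αo, βo) →
        desU X Y ke kh pe ph C0 q < desU X Y ke kh pe ph C0 (αo, βo) := by
  have hc : (0:ℝ) < Real.exp 1 - 1 := by
    have h1 : (1:ℝ) < Real.exp 1 := by
      have := Real.exp_lt_exp.mpr (show (0:ℝ) < 1 by norm_num)
      simpa using this
    linarith
  set c := Real.exp 1 - 1 with hcdef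
  have hcX : (c / X) * X = c := by field_simp
  have hcY : (c / Y) * Y = c := by field_simp
  have hbα : 1 + c * αo = c * ke / (pe * X) := by
    rw [hαo]; field_simp; ring
  have hbβ : 1 + c * βo = c * kh / (ph * Y) := by
    rw [hβo]; field_simp; ring
  refine ⟨⟨⟨le_of_lt hα1, le_of_lt hα2⟩, ⟨le_of_lt hβ1, le_of_lt hβ2⟩, hfeas⟩, ?_⟩
  rintro ⟨a, b⟩ ⟨⟨ha0, ha1⟩, ⟨hb0, hb1⟩, _⟩ hne
  have hA := des_aux ke pe X c αo a hke hpe hX hc hα1 hbα ha0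
  have hB := des_aux kh ph Y c βo b hkh hph hY hc hβ1 hbβ hb0
  have hcase : a ≠ αo ∨ b ≠ βo := by
    by_contra h
    push_neg at h
    exact hne (by simp [h.1, h.2])
  simp only [desU, ← hcdef, hcX, hcY]
  rcases hcase with h | h
  · have h1 := hA.2 h
    have h2 := hB.1
    nlinarith
  · have h1 := hB.2 h
    have h2 := hA.1
    nlinarith
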